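/- The twirl is idempotent: for every complex d×d matrix x, T(T(x)) = T(x). -/

import Mathlib

open Matrix MeasureTheory

attribute [local instance] Matrix.normedAddCommGroup Matrix.normedSpace

/-- The twirl `T x = ∫ s, σ s * x * (σ s)ᴴ ∂μ` with respect to the Haar
probability measure of a compact group is idempotent: `T (T x) = T x`. -/
theorem twirl_idempotent (d : ℕ) (hd : 1 ≤ d)
    {G : Type*} [Group G] [TopologicalSpace G] [IsTopologicalGroup G] [CompactSpace G]
    [MeasurableSpace G] [BorelSpace G]
    (μ : Measure G) [μ.IsHaarMeasure] [IsProbabilityMeasure μ]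
    (σ : G → Matrix (Fin d) (Fin d) ℂ) (hcont : Continuous σ)
    (hunitary : ∀ s : G, (σ s)ᴴ * σ s = 1)
    (hmul : ∀ s t : G, σ (s * t) = σ s * σ t)
    (x : Matrix (Fin d) (Fin d) ℂ) :
    (∫ s, σ s * (∫ u, σ u * x * (σ u)ᴴ ∂μ) * (σ s)ᴴ ∂μ) = ∫ s, σ s * x * (σ s)ᴴ ∂μ := by
  have hcf : Continuous fun u => σ u * x * (σ u)ᴴ :=
    (hcont.matrix_mul continuous_const).matrix_mul hcont.matrix_conjTranspose
  have hi := hcf.integrable_of_hasCompactSupport (μ := μ) (HasCompactSupport.of_compactSpace _)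
  have key : ∀ s : G, σ s * (∫ u, σ u * x * (σ u)ᴴ ∂μ) * (σ s)ᴴ
      = ∫ u, σ u * x * (σ u)ᴴ ∂μ := by
    intro s
    set L : Matrix (Fin d) (Fin d) ℂ →L[ℂ] Matrix (Fin d) (Fin d) ℂ :=
      LinearMap.toContinuousLinearMap
        ((LinearMap.mulRight ℂ ((σ s)ᴴ)).comp (LinearMap.mulLeft ℂ (σ s))) with hL
    have hLapp : ∀ m, L m = σ s * m * (σ s)ᴴ := fun m => rfl
    calc σ s * (∫ u, σ u * x * (σ u)ᴴ ∂μ) * (σ s)ᴴ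
        = L (∫ u, σ u * x * (σ u)ᴴ ∂μ) := rfl
      _ = ∫ u, L (σ u * x * (σ u)ᴴ) ∂μ := (L.integral_comp_comm hi).symm
      _ = ∫ u, σ (s * u) * x * (σ (s * u))ᴴ ∂μ := by
          refine integral_congr_ae (Filter.Eventually.of_forall fun u => ?_)
          simp only [hLapp, hmul, conjTranspose_mul]
          noncomm_ring
      _ = ∫ u, σ u * x * (σ u)ᴴ ∂μ :=
          integral_mul_left_eq_self (fun u => σ u * x * (σ u)ᴴ) s
  calc (∫ s, σ s * (∫ u, σ u * x * (σ u)ᴴ ∂μ) * (σ s)ᴴ ∂μ)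
      = ∫ _s, (∫ u, σ u * x * (σ u)ᴴ ∂μ) ∂μ :=
        integral_congr_ae (Filter.Eventually.of_forall fun s => key s)
    _ = ∫ u, σ u * x * (σ u)ᴴ ∂μ := by simp
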